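/- For all choices x_i, y_i ∈ K_i (1 ≤ i ≤ N), lim_{m→−∞} d(Y^{x_1...x_N}_{m0}(σ), Y^{y_1...y_N}_{m0}(σ)) = 0 for P_{x_1...x_N}-almost every σ ∈ Σ, where P_{x_1...x_N} is the lift outer measure of (1/N)Σ_i δ_{x_i}. -/

import Mathlib

open MeasureTheory ENNReal Filter

/-- A contractive Markov system on a metric space `K` with vertex type `V` and edge type `E`. -/
structure CMS (E V K : Type*) [Fintype E] [MetricSpace K] [MeasurableSpace K] where
  i : E → V
  t : E → V
  Ks : V → Set K
  w : E → K → K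
  p : E → K → ℝ
  a : ℝ
  ha0 : 0 < a
  ha1 : a < 1
  Ks_nonempty : ∀ v, (Ks v).Nonempty
  Ks_meas : ∀ v, MeasurableSet (Ks v)
  Ks_disj : ∀ v v', v ≠ v' → Disjoint (Ks v) (Ks v')
  Ks_cover : ∀ x : K, ∃ v, x ∈ Ks v
  w_meas : ∀ e, Measurable (w e)
  p_meas : ∀ e, Measurable (p e)
  p_nonneg : ∀ e x, 0 ≤ p e x
  p_sum : ∀ x : K, ∑ e, p e x = 1
  p_zero : ∀ e, ∀ x ∉ Ks (i e), p e x = 0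
  w_maps : ∀ e, Set.MapsTo (w e) (Ks (i e)) (Ks (t e))
  contractive : ∀ v, ∀ x ∈ Ks v, ∀ y ∈ Ks v,
      ∑ e, p e x * dist (w e x) (w e y) ≤ a * dist x y

variable {E V K : Type*} [Fintype E] [MetricSpace K] [MeasurableSpace K]

/-- `S.orbit e m x j = w_{e_{m+j}} ∘ ⋯ ∘ w_{e_m} (x)`. -/
def CMS.orbit (S : CMS E V K) (e : ℤ → E) (m : ℤ) (x : K) : ℕ → K
  | 0 => S.w (e m) x
  | j + 1 => S.w (e (m + j + 1)) (S.orbit e m x j)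

/-- `S.pathProb e m x j = p_{e_m}(x) p_{e_{m+1}}(w_{e_m}x) ⋯ p_{e_{m+j}}(w_{e_{m+j-1}}∘⋯∘w_{e_m}x)`. -/
def CMS.pathProb (S : CMS E V K) (e : ℤ → E) (m : ℤ) (x : K) : ℕ → ℝ
  | 0 => S.p (e m) x
  | j + 1 => S.pathProb e m x j * S.p (e (m + j + 1)) (S.orbit e m x j)

/-- The σ-algebra `𝒜_m` on `Σ = E^ℤ` generated by the coordinates with index `≥ m`. -/
def Am (E : Type*) (m : ℤ) : MeasurableSpace (ℤ → E) :=
  ⨆ (i : ℤ) (_ : m ≤ i), MeasurableSpace.comap (fun σ => σ i) ⊤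

/-- The cylinder `_m[e_m, …, e_{m+j}]`. -/
def cyl (m : ℤ) (j : ℕ) (e : ℤ → E) : Set (ℤ → E) :=
  {σ | ∀ k : ℤ, m ≤ k → k ≤ m + j → σ k = e k}

/-- `P` is the family of Markov measures `P^m_x` on `(Σ, 𝒜_m)` of the CMS `S`. -/
def IsKernel (S : CMS E V K) (P : ∀ m : ℤ, K → @Measure (ℤ → E) (Am E m)) : Prop :=
  (∀ (m : ℤ) (x : K), @IsProbabilityMeasure _ (Am E m) (P m x)) ∧
  ∀ (m : ℤ) (x : K) (e : ℤ → E) (j : ℕ),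
    P m x (cyl m j e) = ENNReal.ofReal (S.pathProb e m x j)

/-- The `m`-th lift `Φ_m(ν)(A) = ∫ P^m_x(A) dν(x)`. -/
noncomputable def liftMeas (P : ∀ m : ℤ, K → @Measure (ℤ → E) (Am E m))
    (m : ℤ) (ν : Measure K) (A : Set (ℤ → E)) : ℝ≥0∞ :=
  ∫⁻ x, P m x A ∂ν

/-- The lift outer measure `Φ(ν)`, via coverings `B ⊆ ⋃_{m ≤ 0} A_m`, `A_m ∈ 𝒜_m` (indexed by `m = -n`). -/
noncomputable def PhiM (P : ∀ m : ℤ, K → @Measure (ℤ → E) (Am E m))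
    (ν : Measure K) (B : Set (ℤ → E)) : ℝ≥0∞ :=
  ⨅ (A : ℕ → Set (ℤ → E)) (_ : ∀ n : ℕ, MeasurableSet[Am E (-(n : ℤ))] (A n))
    (_ : B ⊆ ⋃ n, A n), ∑' n : ℕ, liftMeas P (-(n : ℤ)) ν (A n)

/-- `Y^{x_1…x_N}_{m0}(σ) = w_{σ_0}∘⋯∘w_{σ_m}(x_{i(σ_m)})`. -/
noncomputable def CMS.Y (S : CMS E V K) (xs : V → K) (m : ℤ) (σ : ℤ → E) : K :=
  S.orbit σ m (xs (S.i (σ m))) (-m).toNat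

/-- The uniform measure `(1/N) ∑_i δ_{x_i}`. -/
noncomputable def unif [Fintype V] (xs : V → K) : Measure K :=
  ((Fintype.card V : ℝ≥0∞))⁻¹ • ∑ v : V, Measure.dirac (xs v)

/-- The measure `P^m_{x_1…x_N} = Φ_m((1/N)∑δ_{x_i}) = (1/N)∑_i P^m_{x_i}`. -/
noncomputable def PmMix [Fintype V] (P : ∀ m : ℤ, K → @Measure (ℤ → E) (Am E m))
    (xs : V → K) (m : ℤ) : @Measure (ℤ → E) (Am E m) :=
  ((Fintype.card V : ℝ≥0∞))⁻¹ • ∑ v : V, P m (xs v)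

section AuxLemmas

variable {E V K : Type*} [Fintype E] [MetricSpace K] [MeasurableSpace K]

lemma CMS.pathProb_nonneg (S : CMS E V K) (e : ℤ → E) (m : ℤ) (x : K) (j : ℕ) :
    0 ≤ S.pathProb e m x j := by
  induction j with
  | zero => exact S.p_nonneg _ _
  | succ j ih => exact mul_nonneg ih (S.p_nonneg _ _)

lemma CMS.pathProb_first (S : CMS E V K) (e : ℤ → E) (m : ℤ) (x : K) (j : ℕ) :
    S.pathProb e m x j ≠ 0 → S.p (e m) x ≠ 0 := by
  induction j with
  | zero => exact fun h => h
  | succ j ih =>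
    intro h
    exact ih fun hz => h (by simp [CMS.pathProb, hz])

lemma CMS.orbit_congr (S : CMS E V K) {e e' : ℤ → E} (m : ℤ) (x : K) (j : ℕ) :
    (∀ k, m ≤ k → k ≤ m + j → e k = e' k) → S.orbit e m x j = S.orbit e' m x j := by
  induction j with
  | zero => intro h; simp [CMS.orbit, h m le_rfl (by simp)]
  | succ j ih =>
    intro h
    have h1 : e (m + j + 1) = e' (m + j + 1) := h _ (by omega) (by push_cast; omega)
    have h2 := ih fun k hk1 hk2 => h k hk1 (by push_cast at hk2 ⊢; omega)
    simp [CMS.orbit, h1, h2]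

lemma CMS.pathProb_congr (S : CMS E V K) {e e' : ℤ → E} (m : ℤ) (x : K) (j : ℕ) :
    (∀ k, m ≤ k → k ≤ m + j → e k = e' k) → S.pathProb e m x j = S.pathProb e' m x j := by
  induction j with
  | zero => intro h; simp [CMS.pathProb, h m le_rfl (by simp)]
  | succ j ih =>
    intro h
    have h1 : e (m + j + 1) = e' (m + j + 1) := h _ (by omega) (by push_cast; omega)
    have h2 := ih fun k hk1 hk2 => h k hk1 (by push_cast at hk2 ⊢; omega)
    have h3 := S.orbit_congr (e := e) (e' := e') m x j
      fun k hk1 hk2 => h k hk1 (by push_cast at hk2 ⊢; omega)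
    simp [CMS.pathProb, h1, h2, h3]

lemma CMS.orbit_mem_pair (S : CMS E V K) {v : V} {x y : K} (hx : x ∈ S.Ks v) (hy : y ∈ S.Ks v)
    (e : ℤ → E) (m : ℤ) (j : ℕ) :
    S.pathProb e m x j ≠ 0 →
      S.orbit e m x j ∈ S.Ks (S.t (e (m + j))) ∧ S.orbit e m y j ∈ S.Ks (S.t (e (m + j))) := by
  induction j with
  | zero =>
    intro h
    have hx' : x ∈ S.Ks (S.i (e m)) := by
      by_contra hc
      exact h (S.p_zero _ _ hc)
    have hv : S.i (e m) = v := by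
      by_contra hc
      exact Set.disjoint_left.1 (S.Ks_disj _ _ hc) hx' hx
    have hy' : y ∈ S.Ks (S.i (e m)) := hv ▸ hy
    simpa [CMS.orbit] using ⟨S.w_maps (e m) hx', S.w_maps (e m) hy'⟩
  | succ j ih =>
    intro h
    have h1 : S.pathProb e m x j ≠ 0 := fun hz => h (by simp [CMS.pathProb, hz])
    have h2 : S.p (e (m + j + 1)) (S.orbit e m x j) ≠ 0 := fun hz => by
      simp [CMS.pathProb, hz] at h
    obtain ⟨hxj, hyj⟩ := ih h1
    have hmem : S.orbit e m x j ∈ S.Ks (S.i (e (m + j + 1))) := by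
      by_contra hc
      exact h2 (S.p_zero _ _ hc)
    have hv : S.i (e (m + j + 1)) = S.t (e (m + j)) := by
      by_contra hc
      exact Set.disjoint_left.1 (S.Ks_disj _ _ hc) hmem hxj
    have hyj' : S.orbit e m y j ∈ S.Ks (S.i (e (m + j + 1))) := hv ▸ hyj
    have hidx : m + ((j : ℤ) + 1) = m + j + 1 := by ring
    constructor <;>
      · show S.orbit e m _ (j + 1) ∈ S.Ks (S.t (e (m + ((j : ℕ) + 1 : ℕ))))
        rw [show ((((j : ℕ) + 1 : ℕ) : ℤ)) = (j : ℤ) + 1 by push_cast; ring, hidx]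
        first
          | exact S.w_maps (e (m + j + 1)) hmem
          | exact S.w_maps (e (m + j + 1)) hyj'

end AuxLemmas
section ExtLemmas

variable {E : Type*}

/-- Extension of a finite word to a two-sided sequence. -/
noncomputable def extE [Nonempty E] (m : ℤ) (n : ℕ) (f : Fin n → E) (k : ℤ) : E :=
  if h : m ≤ k ∧ k < m + n then f ⟨(k - m).toNat, by omega⟩ else Classical.arbitrary E

lemma extE_eq [Nonempty E] (m : ℤ) (n : ℕ) (f : Fin n → E) (k : ℤ)
    (h1 : m ≤ k) (h2 : k < m + n) :
    extE m n f k = f ⟨(k - m).toNat, by omega⟩ := dif_pos ⟨h1, h2⟩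

lemma extE_apply [Nonempty E] (m : ℤ) (n : ℕ) (f : Fin n → E) (i : Fin n) :
    extE m n f (m + i) = f i := by
  rw [extE_eq m n f _ (by omega) (by push_cast; omega)]
  refine congrArg f (Fin.ext ?_)
  show (m + (i : ℤ) - m).toNat = (i : ℕ)
  omega

lemma snoc_mk_lt {α : Type*} {n : ℕ} (h : Fin n → α) (e : α) {i : ℕ} (hi : i < n)
    {hi2 : i < n + 1} : (Fin.snoc h e : Fin (n + 1) → α) ⟨i, hi2⟩ = h ⟨i, hi⟩ := by
  have heq : (⟨i, hi2⟩ : Fin (n + 1)) = Fin.castSucc ⟨i, hi⟩ := rfl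
  rw [heq, Fin.snoc_castSucc]

lemma snoc_mk_last {α : Type*} {n : ℕ} (h : Fin n → α) (e : α) {i : ℕ} (hi : i = n)
    {hi2 : i < n + 1} : (Fin.snoc h e : Fin (n + 1) → α) ⟨i, hi2⟩ = e := by
  subst hi
  have heq : (⟨i, hi2⟩ : Fin (i + 1)) = Fin.last i := rfl
  rw [heq, Fin.snoc_last]

/-- `Fin.snoc` as an equivalence. -/
def snocE (α : Type*) (n : ℕ) : (Fin n → α) × α ≃ (Fin (n + 1) → α) where
  toFun p := Fin.snoc p.1 p.2
  invFun f := (fun i => f i.castSucc, f (Fin.last n))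
  left_inv p := by
    cases p with
    | mk g e => simp
  right_inv f := by
    funext i
    cases i using Fin.lastCases <;> simp

end ExtLemmas

section KeySum

variable {E V K : Type*} [Fintype E] [MetricSpace K] [MeasurableSpace K]

lemma CMS.keySum [Nonempty E] (S : CMS E V K) {v : V} {x y : K}
    (hx : x ∈ S.Ks v) (hy : y ∈ S.Ks v) (m : ℤ) (j : ℕ) :
    ∑ f : Fin (j + 1) → E,
        S.pathProb (extE m (j + 1) f) m x j *
          dist (S.orbit (extE m (j + 1) f) m x j) (S.orbit (extE m (j + 1) f) m y j)
      ≤ S.a ^ (j + 1) * dist x y := by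
  induction j with
  | zero =>
    rw [← Equiv.sum_comp (Equiv.funUnique (Fin 1) E).symm]
    have hp : ∀ e : E, extE m 1 ((Equiv.funUnique (Fin 1) E).symm e) m = e := by
      intro e
      rw [extE_eq _ _ _ _ le_rfl (by omega)]
      rfl
    simp only [CMS.pathProb, CMS.orbit, hp, zero_add, pow_one]
    exact S.contractive v x hx y hy
  | succ j ih =>
    rw [← Equiv.sum_comp (snocE E (j + 1)), Fintype.sum_prod_type]
    have main : ∀ h : Fin (j + 1) → E,
        ∑ e : E,
          S.pathProb (extE m (j + 2) (snocE E (j + 1) (h, e))) m x (j + 1) *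
            dist (S.orbit (extE m (j + 2) (snocE E (j + 1) (h, e))) m x (j + 1))
              (S.orbit (extE m (j + 2) (snocE E (j + 1) (h, e))) m y (j + 1))
          ≤ S.a *
            (S.pathProb (extE m (j + 1) h) m x j *
              dist (S.orbit (extE m (j + 1) h) m x j) (S.orbit (extE m (j + 1) h) m y j)) := by
      intro h
      set q := S.pathProb (extE m (j + 1) h) m x j with hq
      set zx := S.orbit (extE m (j + 1) h) m x j with hzx
      set zy := S.orbit (extE m (j + 1) h) m y j with hzy
      have hterm : ∀ e : E,
          S.pathProb (extE m (j + 2) (snocE E (j + 1) (h, e))) m x (j + 1) *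
            dist (S.orbit (extE m (j + 2) (snocE E (j + 1) (h, e))) m x (j + 1))
              (S.orbit (extE m (j + 2) (snocE E (j + 1) (h, e))) m y (j + 1))
          = q * (S.p e zx * dist (S.w e zx) (S.w e zy)) := by
        intro e
        set F := extE m (j + 2) (snocE E (j + 1) (h, e)) with hF
        have hagree : ∀ k, m ≤ k → k ≤ m + j → F k = extE m (j + 1) h k := by
          intro k hk1 hk2
          rw [hF, extE_eq _ _ _ _ hk1 (by omega), extE_eq _ _ _ _ hk1 (by omega)]
          exact snoc_mk_lt h e (by omega)
        have hlast : F (m + j + 1) = e := by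
          rw [hF, extE_eq _ _ _ _ (by omega) (by omega)]
          exact snoc_mk_last h e (by omega)
        have e1 : S.pathProb F m x j = q := S.pathProb_congr m x j hagree
        have e2 : S.orbit F m x j = zx := S.orbit_congr m x j hagree
        have e3 : S.orbit F m y j = zy := S.orbit_congr m y j hagree
        simp only [CMS.pathProb, CMS.orbit, e1, e2, e3, hlast]
        ring
      rw [Finset.sum_congr rfl fun e _ => hterm e, ← Finset.mul_sum]
      rcases eq_or_ne q 0 with hq0 | hq0
      · simp [hq0]
      · obtain ⟨hzx', hzy'⟩ := S.orbit_mem_pair hx hy (extE m (j + 1) h) m j hq0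
        have hcon := S.contractive _ zx hzx' zy hzy'
        calc q * ∑ e : E, S.p e zx * dist (S.w e zx) (S.w e zy)
            ≤ q * (S.a * dist zx zy) :=
              mul_le_mul_of_nonneg_left hcon (S.pathProb_nonneg _ _ _ _)
          _ = S.a * (q * dist zx zy) := by ring
    refine le_trans (Finset.sum_le_sum fun h _ => main h) ?_
    rw [← Finset.mul_sum]
    refine le_trans (mul_le_mul_of_nonneg_left ih S.ha0.le) (le_of_eq (by ring))

end KeySum
section CylLemmas

variable {E V K : Type*} [Fintype E] [MetricSpace K] [MeasurableSpace K]

lemma cyl_measurable (m : ℤ) (j : ℕ) (e : ℤ → E) : MeasurableSet[Am E m] (cyl m j e) := by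
  letI : MeasurableSpace (ℤ → E) := Am E m
  have hset : cyl m j e =
      ⋂ (k : ℤ), ⋂ (_ : m ≤ k), ⋂ (_ : k ≤ m + j), (fun σ : ℤ → E => σ k) ⁻¹' {e k} := by
    ext σ
    simp [cyl]
  rw [hset]
  refine MeasurableSet.iInter fun k => MeasurableSet.iInter fun hk =>
    MeasurableSet.iInter fun _ => ?_
  have hle : MeasurableSpace.comap (fun σ : ℤ → E => σ k) ⊤ ≤ Am E m :=
    le_iSup₂ (f := fun (i : ℤ) (_ : m ≤ i) =>
      MeasurableSpace.comap (fun σ : ℤ → E => σ i) ⊤) k hk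
  exact hle _ ⟨{e k}, MeasurableSpace.measurableSet_top, rfl⟩

lemma mem_cyl_extE [Nonempty E] (m : ℤ) (n : ℕ) (σ : ℤ → E) :
    σ ∈ cyl m n (extE m (n + 1) (fun i : Fin (n + 1) => σ (m + i))) := by
  intro k hk1 hk2
  rw [extE_eq _ _ _ _ hk1 (by omega)]
  refine congrArg σ ?_
  show k = m + ((k - m).toNat : ℤ)
  omega

lemma CMS.Y_congr (S : CMS E V K) (xs : V → K) (n : ℕ) {σ σ' : ℤ → E}
    (h : ∀ k, -(n : ℤ) ≤ k → k ≤ -(n : ℤ) + n → σ k = σ' k) :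
    S.Y xs (-(n : ℤ)) σ = S.Y xs (-(n : ℤ)) σ' := by
  unfold CMS.Y
  have hn : ((-(-(n : ℤ)))).toNat = n := by omega
  rw [hn, h (-(n : ℤ)) le_rfl (by omega)]
  exact S.orbit_congr _ _ _ h

/-- If the path probability from `x` is nonzero, `Y` starts at the vertex of `x`. -/
lemma CMS.Y_eq_orbit (S : CMS E V K) {v : V} {x : K} (hx : x ∈ S.Ks v) (xs : V → K)
    (hxs : xs v = x) (n : ℕ) (σ : ℤ → E)
    (hne : S.pathProb σ (-(n : ℤ)) x n ≠ 0) :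
    S.Y xs (-(n : ℤ)) σ = S.orbit σ (-(n : ℤ)) x n := by
  unfold CMS.Y
  have hn : ((-(-(n : ℤ)))).toNat = n := by omega
  have hp : S.p (σ (-(n : ℤ))) x ≠ 0 := S.pathProb_first _ _ _ _ hne
  have hmem : x ∈ S.Ks (S.i (σ (-(n : ℤ)))) := by
    by_contra hc
    exact hp (S.p_zero _ _ hc)
  have hv : S.i (σ (-(n : ℤ))) = v := by
    by_contra hc
    exact Set.disjoint_left.1 (S.Ks_disj _ _ hc) hmem hx
  rw [hn, hv, hxs]

/-- The vertex of `Y` for the second family under nonvanishing path probability of the first. -/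
lemma CMS.Y_eq_orbit' (S : CMS E V K) {v : V} {x : K} (hx : x ∈ S.Ks v) (ys : V → K)
    (n : ℕ) (σ : ℤ → E)
    (hne : S.pathProb σ (-(n : ℤ)) x n ≠ 0) :
    S.Y ys (-(n : ℤ)) σ = S.orbit σ (-(n : ℤ)) (ys v) n := by
  unfold CMS.Y
  have hn : ((-(-(n : ℤ)))).toNat = n := by omega
  have hp : S.p (σ (-(n : ℤ))) x ≠ 0 := S.pathProb_first _ _ _ _ hne
  have hmem : x ∈ S.Ks (S.i (σ (-(n : ℤ)))) := by
    by_contra hc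
    exact hp (S.p_zero _ _ hc)
  have hv : S.i (σ (-(n : ℤ))) = v := by
    by_contra hc
    exact Set.disjoint_left.1 (S.Ks_disj _ _ hc) hmem hx
  rw [hn, hv]

lemma measure_cylUnion_le [Nonempty E] (S : CMS E V K)
    (P : ∀ m : ℤ, K → @Measure (ℤ → E) (Am E m)) (hP : IsKernel S P)
    {v : V} {x y : K} (hx : x ∈ S.Ks v) (hy : y ∈ S.Ks v) (n : ℕ) {t : ℝ} (ht : 0 < t)
    (bad : Finset (Fin (n + 1) → E))
    (hbad : ∀ f ∈ bad, S.pathProb (extE (-(n : ℤ)) (n + 1) f) (-(n : ℤ)) x n ≠ 0 →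
      t ≤ dist (S.orbit (extE (-(n : ℤ)) (n + 1) f) (-(n : ℤ)) x n)
            (S.orbit (extE (-(n : ℤ)) (n + 1) f) (-(n : ℤ)) y n)) :
    P (-(n : ℤ)) x (⋃ f ∈ bad, cyl (-(n : ℤ)) n (extE (-(n : ℤ)) (n + 1) f))
      ≤ ENNReal.ofReal (t⁻¹ * (S.a ^ (n + 1) * dist x y)) := by
  letI : MeasurableSpace (ℤ → E) := Am E (-(n : ℤ))
  set m : ℤ := -(n : ℤ)
  calc P m x (⋃ f ∈ bad, cyl m n (extE m (n + 1) f))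
      ≤ ∑ f ∈ bad, P m x (cyl m n (extE m (n + 1) f)) :=
        measure_biUnion_finset_le bad _
    _ = ∑ f ∈ bad, ENNReal.ofReal (S.pathProb (extE m (n + 1) f) m x n) :=
        Finset.sum_congr rfl fun f _ => hP.2 m x _ n
    _ ≤ ∑ f ∈ bad, ENNReal.ofReal (t⁻¹ * (S.pathProb (extE m (n + 1) f) m x n *
          dist (S.orbit (extE m (n + 1) f) m x n) (S.orbit (extE m (n + 1) f) m y n))) := by
        refine Finset.sum_le_sum fun f hf => ENNReal.ofReal_le_ofReal ?_
        rcases eq_or_ne (S.pathProb (extE m (n + 1) f) m x n) 0 with h0 | h0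
        · rw [h0]
          positivity
        · have hd := hbad f hf h0
          have hpn := S.pathProb_nonneg (extE m (n + 1) f) m x n
          rw [le_inv_mul_iff₀ ht]
          calc t * S.pathProb (extE m (n + 1) f) m x n
              = S.pathProb (extE m (n + 1) f) m x n * t := by ring
            _ ≤ S.pathProb (extE m (n + 1) f) m x n *
                dist (S.orbit (extE m (n + 1) f) m x n)
                  (S.orbit (extE m (n + 1) f) m y n) :=
                mul_le_mul_of_nonneg_left hd hpn
    _ ≤ ∑ f : Fin (n + 1) → E, ENNReal.ofReal (t⁻¹ * (S.pathProb (extE m (n + 1) f) m x n *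
          dist (S.orbit (extE m (n + 1) f) m x n) (S.orbit (extE m (n + 1) f) m y n))) :=
        Finset.sum_le_sum_of_subset (Finset.subset_univ bad)
    _ = ENNReal.ofReal (∑ f : Fin (n + 1) → E, t⁻¹ * (S.pathProb (extE m (n + 1) f) m x n *
          dist (S.orbit (extE m (n + 1) f) m x n) (S.orbit (extE m (n + 1) f) m y n))) := by
        rw [ENNReal.ofReal_sum_of_nonneg]
        intro f _
        have := S.pathProb_nonneg (extE m (n + 1) f) m x n
        positivity
    _ ≤ ENNReal.ofReal (t⁻¹ * (S.a ^ (n + 1) * dist x y)) := by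
        refine ENNReal.ofReal_le_ofReal ?_
        rw [← Finset.mul_sum]
        exact mul_le_mul_of_nonneg_left (S.keySum hx hy m n) (inv_nonneg.2 ht.le)

lemma liftMeas_unif [Fintype V] (P : ∀ m : ℤ, K → @Measure (ℤ → E) (Am E m)) (m : ℤ)
    (xs : V → K) [MeasurableSingletonClass K] (A : Set (ℤ → E)) :
    liftMeas P m (unif xs) A = (Fintype.card V : ℝ≥0∞)⁻¹ * ∑ v : V, P m (xs v) A := by
  unfold liftMeas unif
  rw [lintegral_smul_measure, lintegral_finset_sum_measure]
  exact congrArg _ (Finset.sum_congr rfl fun v _ => lintegral_dirac _ _)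

end CylLemmas
section PhiMLe

variable {E V K : Type*} [Fintype E] [MetricSpace K] [MeasurableSpace K]

lemma PhiM_le (P : ∀ m : ℤ, K → @Measure (ℤ → E) (Am E m)) (ν : Measure K)
    (B : Set (ℤ → E)) (A : ℕ → Set (ℤ → E))
    (h1 : ∀ n : ℕ, MeasurableSet[Am E (-(n : ℤ))] (A n)) (h2 : B ⊆ ⋃ n, A n) :
    PhiM P ν B ≤ ∑' n : ℕ, liftMeas P (-(n : ℤ)) ν (A n) :=
  iInf_le_of_le A (iInf_le_of_le h1 (iInf_le_of_le h2 le_rfl))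

lemma liftMeas_empty (P : ∀ m : ℤ, K → @Measure (ℤ → E) (Am E m)) (ν : Measure K) (m : ℤ) :
    liftMeas P m ν ∅ = 0 := by
  simp [liftMeas]

end PhiMLe
/-- `d(Y^{x_1…x_N}_{m0}(σ), Y^{y_1…y_N}_{m0}(σ)) → 0` as `m → -∞` for
`P_{x_1…x_N}`-almost every `σ`, where `P_{x_1…x_N} = Φ((1/N)∑δ_{x_i})`. -/
theorem statement4 {E V K : Type*} [Fintype E] [Fintype V] [MetricSpace K] [CompleteSpace K]
    [MeasurableSpace K] [BorelSpace K] (S : CMS E V K)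
    (P : ∀ m : ℤ, K → @Measure (ℤ → E) (Am E m)) (hP : IsKernel S P)
    (xs ys : V → K) (hxs : ∀ v, xs v ∈ S.Ks v) (hys : ∀ v, ys v ∈ S.Ks v) :
    PhiM P (unif xs) {σ : ℤ → E |
      ¬ Tendsto (fun n : ℕ => dist (S.Y xs (-(n : ℤ)) σ) (S.Y ys (-(n : ℤ)) σ))
        atTop (nhds 0)} = 0 := by
  classical
  set Bad : Set (ℤ → E) := {σ : ℤ → E |
      ¬ Tendsto (fun n : ℕ => dist (S.Y xs (-(n : ℤ)) σ) (S.Y ys (-(n : ℤ)) σ))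
        atTop (nhds 0)} with hBad
  refine le_antisymm ?_ zero_le
  by_cases hE : Nonempty E
  case neg =>
    haveI : IsEmpty E := not_nonempty_iff.mp hE
    haveI : IsEmpty (ℤ → E) := ⟨fun f => IsEmpty.false (f 0)⟩
    have hcov : Bad ⊆ ⋃ _ : ℕ, (∅ : Set (ℤ → E)) := by
      intro σ _
      exact (IsEmpty.false σ).elim
    refine le_trans (PhiM_le P (unif xs) Bad (fun _ => ∅)
      (fun n => @MeasurableSet.empty _ (Am E (-(n : ℤ)))) hcov) ?_
    simp [liftMeas_empty]
  haveI : Nonempty E := hE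
  haveI : Nonempty V := ⟨S.i (Classical.arbitrary E)⟩
  set b : ℝ := Real.sqrt S.a with hbdef
  have hb0 : 0 < b := Real.sqrt_pos.mpr S.ha0
  have hb1 : b < 1 := by
    rw [hbdef, show (1 : ℝ) = Real.sqrt 1 by rw [Real.sqrt_one]]
    exact Real.sqrt_lt_sqrt S.ha0.le S.ha1
  have hab : S.a = b ^ 2 := (Real.sq_sqrt S.ha0.le).symm
  set D : ℝ := ∑ v : V, dist (xs v) (ys v) with hDdef
  have hD0 : 0 ≤ D := Finset.sum_nonneg fun v _ => dist_nonneg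
  set rr : ℝ≥0∞ := ENNReal.ofReal b with hrrdef
  have hrr1 : rr < 1 := by
    rw [hrrdef, ← ENNReal.ofReal_one]
    exact ENNReal.ofReal_lt_ofReal_iff_of_nonneg hb0.le |>.mpr hb1
  have hgeo : (1 - rr)⁻¹ ≠ ∞ := ENNReal.inv_ne_top.mpr (tsub_pos_iff_lt.mpr hrr1).ne'
  have main : ∀ c : ℝ, 0 < c →
      PhiM P (unif xs) Bad ≤ ENNReal.ofReal (S.a * D / c) * (1 - rr)⁻¹ := by
    intro c hc
    set badF : ∀ n : ℕ, Finset (Fin (n + 1) → E) := fun n =>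
      Finset.univ.filter (fun f => c * b ^ n ≤
        dist (S.Y xs (-(n : ℤ)) (extE (-(n : ℤ)) (n + 1) f))
          (S.Y ys (-(n : ℤ)) (extE (-(n : ℤ)) (n + 1) f))) with hbadF
    set A : ℕ → Set (ℤ → E) := fun n =>
      ⋃ f ∈ badF n, cyl (-(n : ℤ)) n (extE (-(n : ℤ)) (n + 1) f) with hA
    have hmeas : ∀ n : ℕ, MeasurableSet[Am E (-(n : ℤ))] (A n) := by
      intro n
      letI : MeasurableSpace (ℤ → E) := Am E (-(n : ℤ))
      exact Finset.measurableSet_biUnion _ fun f _ => cyl_measurable _ _ _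
    have hcov : Bad ⊆ ⋃ n, A n := by
      intro σ hσ
      simp only [hBad, Set.mem_setOf_eq] at hσ
      have hfreq : ∃ ε > 0, ∀ N : ℕ, ∃ n ≥ N,
          ε ≤ dist (S.Y xs (-(n : ℤ)) σ) (S.Y ys (-(n : ℤ)) σ) := by
        by_contra hcon
        push_neg at hcon
        apply hσ
        rw [Metric.tendsto_atTop]
        intro ε hε
        obtain ⟨N, hN⟩ := hcon ε hε
        refine ⟨N, fun n hn => ?_⟩
        rw [Real.dist_eq, sub_zero, abs_of_nonneg dist_nonneg]
        exact hN n hn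
      obtain ⟨ε, hε, hfr⟩ := hfreq
      have hlim : Tendsto (fun n : ℕ => c * b ^ n) atTop (nhds 0) := by
        simpa using (tendsto_pow_atTop_nhds_zero_of_lt_one hb0.le hb1).const_mul c
      obtain ⟨N, hN⟩ := (Metric.tendsto_atTop.mp hlim) ε hε
      obtain ⟨n, hnN, hdn⟩ := hfr N
      have hcb : c * b ^ n < ε := by
        have := hN n hnN
        rwa [Real.dist_eq, sub_zero, abs_of_nonneg (mul_pos hc (pow_pos hb0 n)).le] at this
      refine Set.mem_iUnion.2 ⟨n, ?_⟩
      set fσ : Fin (n + 1) → E := fun i => σ (-(n : ℤ) + i) with hfσ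
      have hmem : σ ∈ cyl (-(n : ℤ)) n (extE (-(n : ℤ)) (n + 1) fσ) := mem_cyl_extE _ _ _
      have hYx : S.Y xs (-(n : ℤ)) (extE (-(n : ℤ)) (n + 1) fσ) = S.Y xs (-(n : ℤ)) σ :=
        S.Y_congr xs n fun k hk1 hk2 => (hmem k hk1 hk2).symm
      have hYy : S.Y ys (-(n : ℤ)) (extE (-(n : ℤ)) (n + 1) fσ) = S.Y ys (-(n : ℤ)) σ :=
        S.Y_congr ys n fun k hk1 hk2 => (hmem k hk1 hk2).symm
      have hfbad : fσ ∈ badF n := by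
        rw [hbadF]
        refine Finset.mem_filter.2 ⟨Finset.mem_univ _, ?_⟩
        rw [hYx, hYy]
        exact le_trans hcb.le hdn
      exact Set.mem_biUnion hfbad hmem
    refine le_trans (PhiM_le P (unif xs) Bad A hmeas hcov) ?_
    have hn : ∀ n : ℕ, liftMeas P (-(n : ℤ)) (unif xs) (A n) ≤
        ENNReal.ofReal (S.a * D / c) * rr ^ n := by
      intro n
      have hv : ∀ v : V, P (-(n : ℤ)) (xs v) (A n) ≤
          ENNReal.ofReal ((c * b ^ n)⁻¹ * (S.a ^ (n + 1) * dist (xs v) (ys v))) := by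
        intro v
        refine measure_cylUnion_le S P hP (hxs v) (hys v) n (mul_pos hc (pow_pos hb0 n)) (badF n) ?_
        intro f hf hne
        have hle := (Finset.mem_filter.1 (by rw [hbadF] at hf; exact hf)).2
        rwa [S.Y_eq_orbit (hxs v) xs rfl n _ hne, S.Y_eq_orbit' (hxs v) ys n _ hne] at hle
      have hkey : (c * b ^ n)⁻¹ * (S.a ^ (n + 1) * D) = S.a * D / c * b ^ n := by
        have hbne : b ≠ 0 := hb0.ne'
        have hcne : c ≠ 0 := hc.ne'
        rw [hab]
        field_simp
        ring
      calc liftMeas P (-(n : ℤ)) (unif xs) (A n)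
          = (Fintype.card V : ℝ≥0∞)⁻¹ * ∑ v : V, P (-(n : ℤ)) (xs v) (A n) :=
            liftMeas_unif P _ xs (A n)
        _ ≤ (Fintype.card V : ℝ≥0∞)⁻¹ * ∑ v : V,
              ENNReal.ofReal ((c * b ^ n)⁻¹ * (S.a ^ (n + 1) * dist (xs v) (ys v))) :=
            mul_le_mul_right (Finset.sum_le_sum fun v _ => hv v) _
        _ = (Fintype.card V : ℝ≥0∞)⁻¹ *
              ENNReal.ofReal (∑ v : V, (c * b ^ n)⁻¹ * (S.a ^ (n + 1) * dist (xs v) (ys v))) := by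
            rw [ENNReal.ofReal_sum_of_nonneg]
            intro v _
            exact mul_nonneg (inv_nonneg.2 (mul_pos hc (pow_pos hb0 n)).le)
              (mul_nonneg (pow_nonneg S.ha0.le _) dist_nonneg)
        _ ≤ 1 * ENNReal.ofReal (∑ v : V, (c * b ^ n)⁻¹ * (S.a ^ (n + 1) * dist (xs v) (ys v))) :=
            mul_le_mul_left (ENNReal.inv_le_one.mpr (by
              exact_mod_cast Nat.one_le_iff_ne_zero.mpr Fintype.card_ne_zero)) _
        _ = ENNReal.ofReal ((c * b ^ n)⁻¹ * (S.a ^ (n + 1) * D)) := by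
            rw [one_mul, ← Finset.mul_sum, ← Finset.mul_sum]
        _ = ENNReal.ofReal (S.a * D / c) * rr ^ n := by
            rw [hkey, ENNReal.ofReal_mul (div_nonneg (mul_nonneg S.ha0.le hD0) hc.le), hrrdef,
              ← ENNReal.ofReal_pow hb0.le]
    calc ∑' n : ℕ, liftMeas P (-(n : ℤ)) (unif xs) (A n)
        ≤ ∑' n : ℕ, ENNReal.ofReal (S.a * D / c) * rr ^ n := ENNReal.tsum_le_tsum hn
      _ = ENNReal.ofReal (S.a * D / c) * (1 - rr)⁻¹ := by
          rw [ENNReal.tsum_mul_left, ENNReal.tsum_geometric]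
  have hfin : Tendsto (fun k : ℕ => ENNReal.ofReal (S.a * D / (k : ℝ)) * (1 - rr)⁻¹)
      atTop (nhds 0) := by
    have h1 : Tendsto (fun k : ℕ => S.a * D / (k : ℝ)) atTop (nhds 0) :=
      tendsto_const_div_atTop_nhds_zero_nat _
    have h2 := ENNReal.tendsto_ofReal h1
    simpa using ENNReal.Tendsto.mul_const h2 (Or.inr hgeo)
  refine ge_of_tendsto hfin ?_
  filter_upwards [eventually_ge_atTop 1] with k hk
  exact main (k : ℝ) (by exact_mod_cast Nat.lt_of_lt_of_le Nat.zero_lt_one hk)
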